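/- Let A be a Koszul DG algebra such that the trivial module k is a compact object of the derived category D(A). Then the Ext-algebra E = Ext^0_A(k,k) is a finite dimensional local k-algebra with residue field E/J ≅ k, where J is the Jacobson radical of E; moreover J = F_1 for the standard filtration on E. -/

import Mathlib

open scoped TensorProduct

variable (k : Type) [Field k]

/-- A (cochain) differential graded algebra over `k`: a `ℤ`-graded `k`-algebra
together with a degree `1` differential which is a graded derivation. -/
structure DGA where
  A : Type
  [ringA : Ring A]
  [algA : Algebra k A]
  grading : ℤ → Submodule k A
  [gradedA : GradedAlgebra grading]
  d : A →ₗ[k] A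
  d_deg : ∀ (n : ℤ) (a : A), a ∈ grading n → d a ∈ grading (n + 1)
  d_sq : ∀ a : A, d (d a) = 0
  leibniz : ∀ (i : ℤ) (a b : A), a ∈ grading i →
      d (a * b) = d a * b + (Int.negOnePow i : ℤ) • (a * d b)

attribute [instance] DGA.ringA DGA.algA DGA.gradedA

variable {k}

/-- A DG algebra is connected if it is concentrated in non-negative degrees
and its degree `0` part is `k·1`. -/
def DGA.connected (𝔸 : DGA k) : Prop :=
  (∀ n : ℤ, n < 0 → 𝔸.grading n = ⊥) ∧ 𝔸.grading 0 = Submodule.span k {(1 : 𝔸.A)}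

/-- An augmentation of a DG algebra: an algebra map to `k` killing the image of the
differential and all nonzero degrees.  (For a connected DG algebra this is the canonical
projection onto degree `0`.) -/
structure DGA.Aug (𝔸 : DGA k) where
  ε : 𝔸.A →ₐ[k] k
  ε_d : ∀ a, ε (𝔸.d a) = 0
  ε_deg : ∀ n : ℤ, n ≠ 0 → ∀ a ∈ 𝔸.grading n, ε a = 0

/-- A (left) differential graded module over a DG algebra. -/
structure DGMod (𝔸 : DGA k) where
  M : Type
  [acg : AddCommGroup M]
  [amod : Module 𝔸.A M]
  [kmod : Module k M]
  [tower : IsScalarTower k 𝔸.A M]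
  grading : ℤ → Submodule k M
  [decomp : DirectSum.Decomposition grading]
  smul_mem : ∀ (i j : ℤ) (a : 𝔸.A) (m : M), a ∈ 𝔸.grading i → m ∈ grading j →
      a • m ∈ grading (i + j)
  dM : M →ₗ[k] M
  dM_deg : ∀ (n : ℤ) (m : M), m ∈ grading n → dM m ∈ grading (n + 1)
  dM_sq : ∀ m : M, dM (dM m) = 0
  leibniz : ∀ (i : ℤ) (a : 𝔸.A) (m : M), a ∈ 𝔸.grading i →
      dM (a • m) = 𝔸.d a • m + (Int.negOnePow i : ℤ) • (a • dM m)

attribute [instance] DGMod.acg DGMod.amod DGMod.kmod DGMod.tower DGMod.decomp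

/-- The submodule `I(A)·M` where `I(A) = ker ε` is the augmentation ideal. -/
def DGMod.IP {𝔸 : DGA k} (ε : 𝔸.Aug) (P : DGMod 𝔸) : Submodule 𝔸.A P.M :=
  Submodule.span 𝔸.A {x | ∃ (a : 𝔸.A) (m : P.M), ε.ε a = 0 ∧ x = a • m}

/-- A DG module is minimal if `d(M) ⊆ I(A)·M`. -/
def DGMod.Minimal {𝔸 : DGA k} (ε : 𝔸.Aug) (P : DGMod 𝔸) : Prop :=
  ∀ m : P.M, P.dM m ∈ P.IP ε

/-- A semifree resolution of the trivial DG module `k` over an augmented DG algebra: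
a semifree DG module (with a chosen semibasis, witnessing semifreeness) together with a
quasi-isomorphism `εP` onto the trivial module `k` (concentrated in degree `0`,
with `A` acting via the augmentation). -/
structure SFR {𝔸 : DGA k} (ε : 𝔸.Aug) extends DGMod 𝔸 where
  ι : Type
  bas : Module.Basis ι 𝔸.A M
  degB : ι → ℤ
  homog : ∀ i, bas i ∈ grading (degB i)
  lvl : ι → ℕ
  d_lvl : ∀ i, dM (bas i) ∈ Submodule.span 𝔸.A (bas '' {j | lvl j < lvl i})
  εP : M →ₗ[k] k
  εP_lin : ∀ (a : 𝔸.A) (m : M), εP (a • m) = ε.ε a * εP m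
  εP_deg : ∀ n : ℤ, n ≠ 0 → ∀ m ∈ grading n, εP m = 0
  εP_d : ∀ m, εP (dM m) = 0
  qis_surj : ∃ m ∈ grading 0, dM m = 0 ∧ εP m = 1
  qis_ker : ∀ (n : ℤ) (m : M), m ∈ grading n → dM m = 0 → εP m = 0 →
      m ∈ LinearMap.range dM

/-- `Ext^n_A(k,k) = 0`, expressed via a semifree resolution `P` of `k`: every
`A`-semilinear functional `P → k` of cohomological degree `n` which is a cocycle is a
coboundary in `Hom_A(P,k)`. -/
def ExtVanishAt {𝔸 : DGA k} (ε : 𝔸.Aug) (P : SFR ε) (n : ℤ) : Prop :=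
  ∀ f : P.M →ₗ[k] k,
    (∀ (a : 𝔸.A) (m : P.M), f (a • m) = ε.ε a * f m) →
    (∀ i : ℤ, i ≠ -n → ∀ m ∈ P.grading i, f m = 0) →
    (∀ m, f (P.dM m) = 0) →
    ∃ g : P.M →ₗ[k] k,
      (∀ (a : 𝔸.A) (m : P.M), g (a • m) = ε.ε a * g m) ∧
      (∀ i : ℤ, i ≠ -(n - 1) → ∀ m ∈ P.grading i, g m = 0) ∧
      ∀ m, f m = g (P.dM m)

/-- `Ext^n_A(k,k) = 0` for all `n ≠ 0` (the Koszul property, via Proposition 1.1). -/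
def ExtVanish (𝔸 : DGA k) (ε : 𝔸.Aug) : Prop :=
  ∀ P : SFR ε, ∀ n : ℤ, n ≠ 0 → ExtVanishAt ε P n

/-- `Tor^n_A(k,k) = 0` for `n ≠ 0`: for any semifree resolution `P` of `k`, the complex
`k ⊗_A P = P/I(A)P` has vanishing cohomology in nonzero degrees. -/
def TorVanish (𝔸 : DGA k) (ε : 𝔸.Aug) : Prop :=
  ∀ P : SFR ε, ∀ n : ℤ, n ≠ 0 → ∀ m ∈ P.grading n,
    P.dM m ∈ P.toDGMod.IP ε →
      ∃ y ∈ P.grading (n - 1), m - P.dM y ∈ P.toDGMod.IP ε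

/-- `A` is a Koszul DG algebra: the trivial DG module `k` has a minimal semifree
resolution whose semibasis consists of elements of degree `0`. -/
def IsKoszul (𝔸 : DGA k) (ε : 𝔸.Aug) : Prop :=
  ∃ P : SFR ε, P.toDGMod.Minimal ε ∧ ∀ i, P.degB i = 0

/-- A presentation of the cohomology algebra `H(𝔸)` by a DG algebra `𝔹` (with zero
differential): a map defined on cocycles of `𝔸`, multiplicative, additive, grading
preserving, surjective, with kernel exactly the coboundaries. -/
structure HPres (𝔸 𝔹 : DGA k) where
  φ : 𝔸.A → 𝔹.A
  map_add : ∀ a b, 𝔸.d a = 0 → 𝔸.d b = 0 → φ (a + b) = φ a + φ b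
  map_smul : ∀ (c : k) (a), 𝔸.d a = 0 → φ (c • a) = c • φ a
  map_mul : ∀ a b, 𝔸.d a = 0 → 𝔸.d b = 0 → φ (a * b) = φ a * φ b
  map_one : φ 1 = 1
  surj : ∀ n : ℤ, ∀ y ∈ 𝔹.grading n, ∃ a, 𝔸.d a = 0 ∧ a ∈ 𝔸.grading n ∧ φ a = y
  ker : ∀ a, 𝔸.d a = 0 → (φ a = 0 ↔ a ∈ LinearMap.range 𝔸.d)
  graded : ∀ (n : ℤ) (a), 𝔸.d a = 0 → a ∈ 𝔸.grading n → φ a ∈ 𝔹.grading n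

/-- The `k`-span of the semibasis of `P`. -/
def SFR.kE {𝔸 : DGA k} {ε : 𝔸.Aug} (P : SFR ε) : Submodule k P.M :=
  Submodule.span k (Set.range P.bas)

/-- The standard semifree filtration of `P` associated to its semibasis:
`F(0) = A·(kE ∩ ker d)` and `F(n+1) = A·(kE ∩ d⁻¹ F(n))`. -/
def SFR.stdF {𝔸 : DGA k} {ε : 𝔸.Aug} (P : SFR ε) : ℕ → Submodule 𝔸.A P.M
  | 0 => Submodule.span 𝔸.A ((P.kE ⊓ LinearMap.ker P.dM : Submodule k P.M) : Set P.M)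
  | n + 1 => Submodule.span 𝔸.A
      ((P.kE ⊓ Submodule.comap P.dM ((SFR.stdF P n).restrictScalars k) :
        Submodule k P.M) : Set P.M)

/-- The underlying space of the Ext-algebra `E = Ext⁰_A(k,k)` of a Koszul DG algebra,
realized as the `A`-semilinear degree `0` cocycle functionals on a (minimal) semifree
resolution `P` of `k`. -/
def ExtSpace {𝔸 : DGA k} {ε : 𝔸.Aug} (P : SFR ε) : Submodule k (P.M →ₗ[k] k) where
  carrier := {f | (∀ (a : 𝔸.A) (m : P.M), f (a • m) = ε.ε a * f m) ∧
      (∀ n : ℤ, n ≠ 0 → ∀ m ∈ P.grading n, f m = 0) ∧ ∀ m, f (P.dM m) = 0}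
  add_mem' := by
    rintro f g ⟨hf1, hf2, hf3⟩ ⟨hg1, hg2, hg3⟩
    refine ⟨fun a m => ?_, fun n hn m hm => ?_, fun m => ?_⟩
    · simp [hf1, hg1, mul_add]
    · simp [hf2 n hn m hm, hg2 n hn m hm]
    · simp [hf3, hg3]
  zero_mem' := by
    exact ⟨fun a m => by simp, fun n hn m hm => rfl, fun m => rfl⟩
  smul_mem' := by
    rintro c f ⟨hf1, hf2, hf3⟩
    refine ⟨fun a m => ?_, fun n hn m hm => ?_, fun m => ?_⟩
    · simp [hf1, mul_left_comm]
    · simp [hf2 n hn m hm]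
    · simp [hf3]

/-- The unit of the Ext-algebra: the class of the resolution map `εP` itself. -/
def unitE {𝔸 : DGA k} {ε : 𝔸.Aug} (P : SFR ε) : ↥(ExtSpace P) :=
  ⟨P.εP, P.εP_lin, P.εP_deg, P.εP_d⟩

/-- `g : P → P` is a lift (through the resolution `εP : P → k`) of the Ext-class `x`:
an `A`-linear chain map of degree `0` with `εP ∘ g = x`. -/
def IsLift {𝔸 : DGA k} {ε : 𝔸.Aug} (P : SFR ε) (g : P.M →ₗ[k] P.M)
    (x : ↥(ExtSpace P)) : Prop :=
  (∀ (a : 𝔸.A) (m : P.M), g (a • m) = a • g m) ∧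
  (∀ n : ℤ, ∀ m ∈ P.grading n, g m ∈ P.grading n) ∧
  (∀ m, g (P.dM m) = P.dM (g m)) ∧
  (∀ m, (x : P.M →ₗ[k] k) m = P.εP (g m))

/-- `mul` is the Yoneda (composition) product on `E = Ext⁰_A(k,k)`:
`y·x = y ∘ g` for any lift `g` of `x`. -/
def MulCompat {𝔸 : DGA k} {ε : 𝔸.Aug} (P : SFR ε)
    (mul : ↥(ExtSpace P) → ↥(ExtSpace P) → ↥(ExtSpace P)) : Prop :=
  ∀ (y x : ↥(ExtSpace P)) (g : P.M →ₗ[k] P.M), IsLift P g x →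
    ∀ m, (↑(mul y x) : P.M →ₗ[k] k) m = (↑y : P.M →ₗ[k] k) (g m)

/-- `mul` makes `E` an associative unital `k`-algebra with unit `εP`, and is the
Yoneda product. -/
structure ExtMulOk {𝔸 : DGA k} {ε : 𝔸.Aug} (P : SFR ε)
    (mul : ↥(ExtSpace P) → ↥(ExtSpace P) → ↥(ExtSpace P)) : Prop where
  compat : MulCompat P mul
  add_left : ∀ y₁ y₂ x, mul (y₁ + y₂) x = mul y₁ x + mul y₂ x
  add_right : ∀ y x₁ x₂, mul y (x₁ + x₂) = mul y x₁ + mul y x₂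
  smul_left : ∀ (c : k) y x, mul (c • y) x = c • mul y x
  smul_right : ∀ (c : k) y x, mul y (c • x) = c • mul y x
  assoc : ∀ z y x, mul (mul z y) x = mul z (mul y x)
  one_mul : ∀ x, mul (unitE P) x = x
  mul_one : ∀ x, mul x (unitE P) = x

/-- The canonical decreasing filtration on the Ext-algebra: `F₀ = E` and
`F_{n+1} = {x ∈ E | x` vanishes on the standard filtration step `P(n)}`. -/
noncomputable def Fil {𝔸 : DGA k} {ε : 𝔸.Aug} (P : SFR ε) : ℕ → Submodule k ↥(ExtSpace P)
  | 0 => ⊤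
  | n + 1 => ⨅ (m : P.M) (_ : m ∈ P.stdF n),
      LinearMap.ker ((LinearMap.applyₗ m).comp (ExtSpace P).subtype)


theorem Fil_zero {𝔸 : DGA k} {ε : 𝔸.Aug} (P : SFR ε) : Fil P 0 = ⊤ := rfl

attribute [irreducible] ExtSpace Fil

instance {𝔸 : DGA k} {ε : 𝔸.Aug} (P : SFR ε) : AddCommGroup ↥(ExtSpace P) :=
  inferInstance

instance {𝔸 : DGA k} {ε : 𝔸.Aug} (P : SFR ε) : Module k ↥(ExtSpace P) :=
  inferInstance

noncomputable instance {𝔸 : DGA k} {ε : 𝔸.Aug} (P : SFR ε) (n : ℕ) :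
    AddCommGroup ↥(Fil P n) := inferInstance

noncomputable instance {𝔸 : DGA k} {ε : 𝔸.Aug} (P : SFR ε) (n : ℕ) :
    Module k ↥(Fil P n) := inferInstance
/-- Powers with respect to a (Yoneda) multiplication on the Ext-space. -/
def mulPow {𝔸 : DGA k} {ε : 𝔸.Aug} (P : SFR ε)
    (mul : ↥(ExtSpace P) → ↥(ExtSpace P) → ↥(ExtSpace P)) (x : ↥(ExtSpace P)) :
    ℕ → ↥(ExtSpace P)
  | 0 => unitE P
  | n + 1 => mul x (mulPow P mul x n)

/-- The `n`-th graded piece `F_n/F_{n+1}` of the associated graded algebra of the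
filtered Ext-algebra. -/
def GrPiece {𝔸 : DGA k} {ε : 𝔸.Aug} (P : SFR ε) (n : ℕ) :=
  ↥(Fil P n) ⧸ Submodule.comap (Fil P n).subtype (Fil P (n + 1))

noncomputable instance {𝔸 : DGA k} {ε : 𝔸.Aug} (P : SFR ε) (n : ℕ) :
    AddCommGroup (GrPiece P n) := by unfold GrPiece; infer_instance

noncomputable instance {𝔸 : DGA k} {ε : 𝔸.Aug} (P : SFR ε) (n : ℕ) :
    Module k (GrPiece P n) := by unfold GrPiece; infer_instance

/-- The class of an element of `F_n` in the graded piece `F_n/F_{n+1}`. -/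
noncomputable def grMk {𝔸 : DGA k} {ε : 𝔸.Aug} (P : SFR ε) (n : ℕ) (x : ↥(Fil P n)) : GrPiece P n :=
  Submodule.Quotient.mk x
section Aux

unseal ExtSpace Fil

open Module

variable {𝔸 : DGA k} {ε : 𝔸.Aug}

lemma mem_ExtSpace_iff (P : SFR ε) (f : P.M →ₗ[k] k) :
    f ∈ ExtSpace P ↔ (∀ (a : 𝔸.A) (m : P.M), f (a • m) = ε.ε a * f m) ∧
      (∀ n : ℤ, n ≠ 0 → ∀ m ∈ P.grading n, f m = 0) ∧ ∀ m, f (P.dM m) = 0 := Iff.rfl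

lemma mem_Fil_succ_iff (P : SFR ε) (n : ℕ) (x : ↥(ExtSpace P)) :
    x ∈ Fil P (n+1) ↔ ∀ m ∈ P.stdF n, (x : P.M →ₗ[k] k) m = 0 := by
  simp [Fil, Submodule.mem_iInf, LinearMap.mem_ker]

lemma semilinear_vanish_IP {P : SFR ε} {f : P.M →ₗ[k] k}
    (hf : ∀ (a : 𝔸.A) (m : P.M), f (a • m) = ε.ε a * f m)
    {w : P.M} (hw : w ∈ P.toDGMod.IP ε) : f w = 0 := by
  induction hw using Submodule.span_induction with
  | mem u hu => obtain ⟨a, m, ha, rfl⟩ := hu; rw [hf, ha, zero_mul]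
  | zero => exact map_zero f
  | add u v _ _ hu hv => rw [map_add, hu, hv, add_zero]
  | smul a u _ hu => rw [hf, hu, mul_zero]

lemma mem_of_decompose_ne_zero {ι M σ : Type*} [DecidableEq ι] [AddCommMonoid M]
    [SetLike σ M] [AddSubmonoidClass σ M] (ℳ : ι → σ) [DirectSum.Decomposition ℳ]
    {x : M} {i : ι} (h : ∀ j, j ≠ i → (DirectSum.decompose ℳ x j : M) = 0) : x ∈ ℳ i := by
  classical
  have hx := DirectSum.sum_support_decompose ℳ x
  rw [← hx]
  apply sum_mem
  intro j _
  by_cases hji : j = i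
  · subst hji; exact SetLike.coe_mem _
  · rw [h j hji]; exact zero_mem _

lemma SFR.repr_mem_grading (P : SFR ε) [Fintype P.ι] {n : ℤ} {m : P.M}
    (hm : m ∈ P.grading n) (l : P.ι) :
    P.bas.repr m l ∈ 𝔸.grading (n - P.degB l) := by
  classical
  apply mem_of_decompose_ne_zero
  intro e he
  set D : 𝔸.A → ℤ → 𝔸.A := fun a f => (DirectSum.decompose 𝔸.grading a f : 𝔸.A) with hD
  set q : ℤ := e + P.degB l with hq
  have hqn : q ≠ n := by intro h; exact he (by omega)
  set v : ℤ → P.M := fun q' => ∑ i, D (P.bas.repr m i) (q' - P.degB i) • P.bas i with hv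
  have hvmem : ∀ q', v q' ∈ P.grading q' := by
    intro q'
    apply sum_mem
    intro i _
    have h1 : D (P.bas.repr m i) (q' - P.degB i) ∈ 𝔸.grading (q' - P.degB i) :=
      SetLike.coe_mem _
    have h2 := P.smul_mem _ _ _ _ h1 (P.homog i)
    rwa [sub_add_cancel] at h2
  set Q : Finset ℤ := (Finset.univ.biUnion fun i : P.ι =>
      (DFinsupp.support (DirectSum.decompose 𝔸.grading (P.bas.repr m i))).image
        (· + P.degB i)) ∪ {q} with hQ
  have hqQ : q ∈ Q := Finset.mem_union_right _ (Finset.mem_singleton_self q)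
  have key : ∀ i : P.ι, ∑ q' ∈ Q, D (P.bas.repr m i) (q' - P.degB i) = P.bas.repr m i := by
    intro i
    have hinj : Set.InjOn (· - P.degB i) Q := fun a _ b _ hab => by
      simpa using hab
    rw [← Finset.sum_image (fun a ha b hb hab => hinj ha hb hab)]
    have hsub : DFinsupp.support (DirectSum.decompose 𝔸.grading (P.bas.repr m i))
        ⊆ Q.image (· - P.degB i) := by
      intro e' he'
      refine Finset.mem_image.2 ⟨e' + P.degB i, ?_, by ring⟩
      refine Finset.mem_union_left _ (Finset.mem_biUnion.2 ⟨i, Finset.mem_univ i, ?_⟩)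
      exact Finset.mem_image.2 ⟨e', he', rfl⟩
    have hz : ∀ e' ∈ Q.image (· - P.degB i),
        e' ∉ DFinsupp.support (DirectSum.decompose 𝔸.grading (P.bas.repr m i)) →
        D (P.bas.repr m i) e' = 0 := fun e' _ he' => by
      simpa [hD] using DFinsupp.notMem_support_iff.1 he'
    rw [← Finset.sum_subset hsub hz]
    exact DirectSum.sum_support_decompose 𝔸.grading (P.bas.repr m i)
  have hsum : ∑ q' ∈ Q, v q' = m := by
    calc ∑ q' ∈ Q, v q' = ∑ i, (∑ q' ∈ Q, D (P.bas.repr m i) (q' - P.degB i)) • P.bas i := by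
          rw [Finset.sum_comm]
          exact Finset.sum_congr rfl fun i _ => (Finset.sum_smul).symm
      _ = ∑ i, P.bas.repr m i • P.bas i := by
          exact Finset.sum_congr rfl fun i _ => by rw [key]
      _ = m := Basis.sum_repr P.bas m
  have hvq : v q = 0 := by
    have h2 : ((DirectSum.decompose P.grading m q : P.grading q) : P.M)
        = ∑ q' ∈ Q, ((DirectSum.decompose P.grading (v q') q : P.grading q) : P.M) := by
      conv_lhs => rw [← hsum]
      rw [DirectSum.decompose_sum]
      rw [DFinsupp.finset_sum_apply]
      push_cast
      rfl
    have h0 : ((DirectSum.decompose P.grading m q : P.grading q) : P.M) = 0 :=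
      DirectSum.decompose_of_mem_ne _ hm (Ne.symm hqn)
    rw [h0, Finset.sum_eq_single q (fun q' _ hq' =>
      DirectSum.decompose_of_mem_ne _ (hvmem q') hq') (fun h => absurd hqQ h)] at h2
    rw [DirectSum.decompose_of_mem_same _ (hvmem q)] at h2
    exact h2.symm
  have hrepr : P.bas.repr (v q) l = D (P.bas.repr m l) (q - P.degB l) := by
    rw [hv]
    simp only [map_sum, map_smul, Basis.repr_self]
    rw [Finsupp.finset_sum_apply]
    simp only [Finsupp.smul_apply, Finsupp.single_apply, smul_eq_mul]
    rw [Finset.sum_eq_single l (fun i _ hi => by rw [if_neg hi, mul_zero])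
      (fun h => absurd (Finset.mem_univ l) h)]
    rw [if_pos rfl, mul_one]
  show D (P.bas.repr m l) e = 0
  have : D (P.bas.repr m l) (q - P.degB l) = 0 := by
    rw [← hrepr, hvq, map_zero, Finsupp.coe_zero, Pi.zero_apply]
  rwa [hq, add_sub_cancel_right] at this


noncomputable def SFR.dualFn (P : SFR ε) [Fintype P.ι] (l : P.ι) : P.M →ₗ[k] k where
  toFun m := ε.ε (P.bas.repr m l)
  map_add' m m' := by
    show ε.ε (P.bas.repr (m + m') l) = ε.ε (P.bas.repr m l) + ε.ε (P.bas.repr m' l)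
    rw [map_add, Finsupp.add_apply, map_add]
  map_smul' c m := by
    show ε.ε (P.bas.repr (c • m) l) = c • ε.ε (P.bas.repr m l)
    rw [← algebraMap_smul 𝔸.A c m, LinearEquiv.map_smul, Finsupp.smul_apply, smul_eq_mul,
      map_mul, AlgHom.commutes, Algebra.algebraMap_self_apply, smul_eq_mul]

lemma SFR.dualFn_apply (P : SFR ε) [Fintype P.ι] (l : P.ι) (m : P.M) :
    P.dualFn l m = ε.ε (P.bas.repr m l) := rfl

lemma SFR.dualFn_semilinear (P : SFR ε) [Fintype P.ι] (l : P.ι) (a : 𝔸.A) (m : P.M) :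
    P.dualFn l (a • m) = ε.ε a * P.dualFn l m := by
  rw [SFR.dualFn_apply, SFR.dualFn_apply, LinearEquiv.map_smul, Finsupp.smul_apply,
    smul_eq_mul, map_mul]

lemma SFR.dualFn_vanish (P : SFR ε) [Fintype P.ι] (l : P.ι) {n : ℤ} {m : P.M}
    (hm : m ∈ P.grading n) (hne : n ≠ P.degB l) : P.dualFn l m = 0 :=
  ε.ε_deg (n - P.degB l) (sub_ne_zero.2 hne) _ (P.repr_mem_grading hm l)

lemma SFR.dualFn_d (P : SFR ε) [Fintype P.ι] (hmin : P.toDGMod.Minimal ε) (l : P.ι)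
    (m : P.M) : P.dualFn l (P.dM m) = 0 :=
  semilinear_vanish_IP (P.dualFn_semilinear l) (hmin m)

lemma SFR.dualFn_bas (P : SFR ε) [Fintype P.ι] (l : P.ι) : P.dualFn l (P.bas l) = 1 := by
  rw [SFR.dualFn_apply, Basis.repr_self, Finsupp.single_eq_same, map_one]

lemma degB_eq_zero (P : SFR ε) [Fintype P.ι] (hKoszul : ExtVanish 𝔸 ε)
    (hmin : P.toDGMod.Minimal ε) (l : P.ι) : P.degB l = 0 := by
  by_contra hne
  obtain ⟨g, hg1, _, hg3⟩ := hKoszul P (-(P.degB l)) (neg_ne_zero.2 hne) (P.dualFn l)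
    (P.dualFn_semilinear l)
    (fun i hi m hm => P.dualFn_vanish l hm (by omega)) (P.dualFn_d hmin l)
  have h1 : P.dualFn l (P.bas l) = 0 := by
    rw [hg3]; exact semilinear_vanish_IP hg1 (hmin _)
  rw [P.dualFn_bas] at h1
  exact one_ne_zero h1

lemma eq_zero_of_IP_of_grading_zero (P : SFR ε) [Fintype P.ι] (hconn : 𝔸.connected)
    (hdeg : ∀ i, P.degB i = 0) {w : P.M} (hw0 : w ∈ P.grading 0)
    (hwIP : w ∈ P.toDGMod.IP ε) : w = 0 := by
  have hz : ∀ l, P.bas.repr w l = 0 := by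
    intro l
    have hr : P.bas.repr w l ∈ 𝔸.grading 0 := by
      have := P.repr_mem_grading hw0 l; rwa [hdeg, sub_zero] at this
    rw [hconn.2] at hr
    obtain ⟨c, hc⟩ := Submodule.mem_span_singleton.1 hr
    have h0 : P.dualFn l w = 0 := semilinear_vanish_IP (P.dualFn_semilinear l) hwIP
    rw [SFR.dualFn_apply, ← hc, map_smul, map_one, smul_eq_mul, mul_one] at h0
    rw [← hc, h0, zero_smul]
  have := Basis.sum_repr P.bas w
  rw [← this]
  exact Finset.sum_eq_zero fun i _ => by rw [hz, zero_smul]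

lemma kE_le_grading_zero (P : SFR ε) (hdeg : ∀ i, P.degB i = 0) :
    P.kE ≤ (P.grading 0).restrictScalars k := by
  rw [SFR.kE, Submodule.span_le]
  rintro u ⟨i, rfl⟩
  exact hdeg i ▸ P.homog i

lemma grading_zero_mem_kE (P : SFR ε) [Fintype P.ι] (hconn : 𝔸.connected)
    (hdeg : ∀ i, P.degB i = 0) {w : P.M} (hw : w ∈ P.grading 0) : w ∈ P.kE := by
  rw [← Basis.sum_repr P.bas w]
  apply sum_mem
  intro i _
  have hr : P.bas.repr w i ∈ 𝔸.grading 0 := by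
    have := P.repr_mem_grading hw i; rwa [hdeg, sub_zero] at this
  rw [hconn.2] at hr
  obtain ⟨c, hc⟩ := Submodule.mem_span_singleton.1 hr
  rw [← hc, smul_assoc, one_smul]
  exact Submodule.smul_mem _ _ (Submodule.subset_span ⟨i, rfl⟩)

lemma exists_preimage_grading (P : SFR ε) {w : P.M} (hw : w ∈ P.grading 1)
    (hy : ∃ y, P.dM y = w) : ∃ y0 ∈ P.grading 0, P.dM y0 = w := by
  classical
  obtain ⟨y, rfl⟩ := hy
  refine ⟨((DirectSum.decompose P.grading y 0 : P.grading 0) : P.M), SetLike.coe_mem _, ?_⟩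
  have key : ∀ z : P.M, P.dM ((DirectSum.decompose P.grading z 0 : P.grading 0) : P.M)
      = ((DirectSum.decompose P.grading (P.dM z) 1 : P.grading 1) : P.M) := by
    intro z
    refine DirectSum.Decomposition.inductionOn P.grading
      (motive := fun z => P.dM ((DirectSum.decompose P.grading z 0 : P.grading 0) : P.M)
        = ((DirectSum.decompose P.grading (P.dM z) 1 : P.grading 1) : P.M)) ?_ ?_ ?_ z
    · simp
    · intro i u
      by_cases hi : i = 0
      · subst hi
        rw [DirectSum.decompose_of_mem_same _ u.2,
          DirectSum.decompose_of_mem_same _ (by simpa using P.dM_deg 0 _ u.2)]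
      · rw [DirectSum.decompose_of_mem_ne _ u.2 hi, map_zero,
          DirectSum.decompose_of_mem_ne _ (P.dM_deg i _ u.2) (by omega)]
    · intro a b ha hb
      rw [DirectSum.decompose_add, DFinsupp.add_apply, Submodule.coe_add, map_add, ha, hb,
        map_add, DirectSum.decompose_add, DFinsupp.add_apply, Submodule.coe_add]
  rw [key, DirectSum.decompose_of_mem_same _ hw]

lemma exists_liftAux (P : SFR ε) (w : P.M) (c : k) :
    ∃ y : P.M, (P.dM w = 0 ∧ w ∈ P.grading 1) →
      (y ∈ P.grading 0 ∧ P.εP y = c ∧ P.dM y = w) := by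
  by_cases h : P.dM w = 0 ∧ w ∈ P.grading 1
  · obtain ⟨hdw, hw1⟩ := h
    have hεw : P.εP w = 0 := P.εP_deg 1 one_ne_zero w hw1
    have hr : w ∈ LinearMap.range P.dM := P.qis_ker 1 w hw1 hdw hεw
    obtain ⟨y0, hy0g, hy0d⟩ := exists_preimage_grading P hw1 (by
      obtain ⟨y, hy⟩ := hr; exact ⟨y, hy⟩)
    obtain ⟨e, he0, hde, hεe⟩ := P.qis_surj
    refine ⟨y0 + (c - P.εP y0) • e, fun _ => ⟨?_, ?_, ?_⟩⟩
    · exact add_mem hy0g (Submodule.smul_mem _ _ he0)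
    · rw [map_add, map_smul, hεe, smul_eq_mul, mul_one]; ring
    · rw [map_add, map_smul, hde, smul_zero, add_zero, hy0d]
  · exact ⟨0, fun hc => absurd hc h⟩


noncomputable def SFR.liftVal (P : SFR ε) [Fintype P.ι] (x : P.M →ₗ[k] k) (i : P.ι) :
    P.M :=
  Classical.choose (exists_liftAux P
    (∑ j : P.ι, if _h : P.lvl j < P.lvl i
      then P.bas.repr (P.dM (P.bas i)) j • P.liftVal x j else 0)
    (x (P.bas i)))
termination_by P.lvl i
decreasing_by all_goals exact _h

noncomputable def SFR.gmap (P : SFR ε) [Fintype P.ι] (x : P.M →ₗ[k] k) :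
    P.M →ₗ[k] P.M :=
  LinearMap.restrictScalars k (Basis.constr P.bas ℕ (P.liftVal x))

lemma SFR.gmap_apply (P : SFR ε) [Fintype P.ι] (x : P.M →ₗ[k] k) (m : P.M) :
    P.gmap x m = ∑ i, P.bas.repr m i • P.liftVal x i := by
  show Basis.constr P.bas ℕ (P.liftVal x) m = _
  rw [Basis.constr_apply_fintype]
  rfl

lemma SFR.gmap_smul (P : SFR ε) [Fintype P.ι] (x : P.M →ₗ[k] k) (a : 𝔸.A) (m : P.M) :
    P.gmap x (a • m) = a • P.gmap x m :=
  (Basis.constr P.bas ℕ (P.liftVal x)).map_smul a m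

lemma SFR.gmap_bas (P : SFR ε) [Fintype P.ι] (x : P.M →ₗ[k] k) (i : P.ι) :
    P.gmap x (P.bas i) = P.liftVal x i := by
  show Basis.constr P.bas ℕ (P.liftVal x) (P.bas i) = _
  rw [Basis.constr_basis]

/-- The defect of `gmap` being a chain map, as a `k`-linear map. -/
noncomputable def SFR.defect (P : SFR ε) [Fintype P.ι] (x : P.M →ₗ[k] k) :
    P.M →ₗ[k] P.M :=
  P.dM ∘ₗ P.gmap x - P.gmap x ∘ₗ P.dM

lemma SFR.defect_apply (P : SFR ε) [Fintype P.ι] (x : P.M →ₗ[k] k) (m : P.M) :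
    P.defect x m = P.dM (P.gmap x m) - P.gmap x (P.dM m) := rfl

lemma SFR.defect_smul (P : SFR ε) [Fintype P.ι] (x : P.M →ₗ[k] k) {n : ℤ} {a : 𝔸.A}
    (ha : a ∈ 𝔸.grading n) (m : P.M) :
    P.defect x (a • m) = (Int.negOnePow n : ℤ) • (a • P.defect x m) := by
  rw [SFR.defect_apply, SFR.defect_apply, P.gmap_smul,
    P.toDGMod.leibniz n a (P.gmap x m) ha, P.toDGMod.leibniz n a m ha, map_add,
    map_zsmul, P.gmap_smul, P.gmap_smul, smul_sub, smul_sub]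
  abel

lemma SFR.defect_zero_smul (P : SFR ε) [Fintype P.ι] (x : P.M →ₗ[k] k) {m : P.M}
    (hm : P.defect x m = 0) (a : 𝔸.A) : P.defect x (a • m) = 0 := by
  refine DirectSum.Decomposition.inductionOn 𝔸.grading
    (motive := fun a : 𝔸.A => P.defect x (a • m) = 0) ?_ ?_ ?_ a
  · show P.defect x ((0 : 𝔸.A) • m) = 0
    rw [zero_smul, map_zero]
  · intro i u
    show P.defect x ((u : 𝔸.A) • m) = 0
    rw [P.defect_smul x u.2, hm, smul_zero, smul_zero]
  · intro a b ha hb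
    show P.defect x ((a + b) • m) = 0
    rw [add_smul, map_add, ha, hb, add_zero]

lemma SFR.gmap_chain_on (P : SFR ε) [Fintype P.ι] (x : P.M →ₗ[k] k) (s : Set P.ι)
    (hbase : ∀ j ∈ s, P.dM (P.liftVal x j) = P.gmap x (P.dM (P.bas j))) :
    ∀ m ∈ Submodule.span 𝔸.A (P.bas '' s), P.dM (P.gmap x m) = P.gmap x (P.dM m) := by
  have key : ∀ m ∈ Submodule.span 𝔸.A (P.bas '' s), P.defect x m = 0 := by
    intro m hm
    induction hm using Submodule.span_induction with
    | mem u hu =>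
      obtain ⟨j, hj, rfl⟩ := hu
      rw [SFR.defect_apply, P.gmap_bas, hbase j hj, sub_self]
    | zero => exact map_zero _
    | add u v _ _ hu hv => rw [map_add, hu, hv, add_zero]
    | smul a u _ hu => exact P.defect_zero_smul x hu a
  intro m hm
  have := key m hm
  rw [SFR.defect_apply] at this
  exact sub_eq_zero.1 this

lemma SFR.liftVal_spec (P : SFR ε) [Fintype P.ι] (hdeg : ∀ i, P.degB i = 0)
    (x : P.M →ₗ[k] k) (i : P.ι) :
    P.liftVal x i ∈ P.grading 0 ∧ P.εP (P.liftVal x i) = x (P.bas i) ∧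
      P.dM (P.liftVal x i) = P.gmap x (P.dM (P.bas i)) := by
  suffices H : ∀ N : ℕ, ∀ i : P.ι, P.lvl i < N →
      (P.liftVal x i ∈ P.grading 0 ∧ P.εP (P.liftVal x i) = x (P.bas i) ∧
        P.dM (P.liftVal x i) = P.gmap x (P.dM (P.bas i))) from
    H (P.lvl i + 1) i (Nat.lt_succ_self _)
  intro N
  induction N with
  | zero => exact fun i hi => absurd hi (Nat.not_lt_zero _)
  | succ N IH =>
    intro i hiN
    have hw : (∑ j : P.ι, if _h : P.lvl j < P.lvl i
        then P.bas.repr (P.dM (P.bas i)) j • P.liftVal x j else 0)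
        = P.gmap x (P.dM (P.bas i)) := by
      rw [P.gmap_apply]
      refine Finset.sum_congr rfl fun j _ => ?_
      by_cases h : P.lvl j < P.lvl i
      · rw [dif_pos h]
      · rw [dif_neg h]
        have hs := (Basis.mem_span_image P.bas).1 (P.d_lvl i)
        have hz : P.bas.repr (P.dM (P.bas i)) j = 0 := by
          by_contra hne
          exact h (hs (Finsupp.mem_support_iff.2 hne))
        rw [hz, zero_smul]
    have hbas1 : P.bas i ∈ P.grading 0 := hdeg i ▸ P.homog i
    have hdb : P.dM (P.bas i) ∈ P.grading 1 := by
      simpa using P.dM_deg 0 _ hbas1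
    have hchain : ∀ m ∈ Submodule.span 𝔸.A (P.bas '' {j | P.lvl j < P.lvl i}),
        P.dM (P.gmap x m) = P.gmap x (P.dM m) :=
      P.gmap_chain_on x _ (fun j hj =>
        (IH j (lt_of_lt_of_le hj (Nat.lt_succ_iff.1 hiN))).2.2)
    have hd0 : P.dM (P.gmap x (P.dM (P.bas i))) = 0 := by
      rw [hchain _ (P.d_lvl i), P.dM_sq, map_zero]
    have hg1 : P.gmap x (P.dM (P.bas i)) ∈ P.grading 1 := by
      rw [P.gmap_apply]
      apply sum_mem
      intro j _
      by_cases h : P.lvl j < P.lvl i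
      · have hrep := P.repr_mem_grading hdb j
        rw [hdeg j, sub_zero] at hrep
        have := P.smul_mem _ _ _ _ hrep
          (IH j (lt_of_lt_of_le h (Nat.lt_succ_iff.1 hiN))).1
        simpa using this
      · have hs := (Basis.mem_span_image P.bas).1 (P.d_lvl i)
        have hz : P.bas.repr (P.dM (P.bas i)) j = 0 := by
          by_contra hne
          exact h (hs (Finsupp.mem_support_iff.2 hne))
        rw [hz, zero_smul]
        exact zero_mem _
    have hspec := Classical.choose_spec (exists_liftAux P
      (∑ j : P.ι, if _h : P.lvl j < P.lvl i
        then P.bas.repr (P.dM (P.bas i)) j • P.liftVal x j else 0)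
      (x (P.bas i)))
    have hcond : P.dM (∑ j : P.ι, if _h : P.lvl j < P.lvl i
        then P.bas.repr (P.dM (P.bas i)) j • P.liftVal x j else 0) = 0 ∧
        (∑ j : P.ι, if _h : P.lvl j < P.lvl i
          then P.bas.repr (P.dM (P.bas i)) j • P.liftVal x j else 0) ∈ P.grading 1 := by
      rw [hw]; exact ⟨hd0, hg1⟩
    have h := hspec hcond
    rw [SFR.liftVal]
    exact ⟨h.1, h.2.1, h.2.2.trans hw⟩


lemma isLift_gmap (P : SFR ε) [Fintype P.ι] (hdeg : ∀ i, P.degB i = 0)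
    (x : ↥(ExtSpace P)) : IsLift P (P.gmap (x : P.M →ₗ[k] k)) x := by
  obtain ⟨hx1, hx2, hx3⟩ := (mem_ExtSpace_iff P (x : P.M →ₗ[k] k)).1 x.2
  refine ⟨fun a m => P.gmap_smul _ a m, ?_, ?_, ?_⟩
  · intro n m hm
    rw [P.gmap_apply]
    apply sum_mem
    intro j _
    have hrep := P.repr_mem_grading hm j
    rw [hdeg j, sub_zero] at hrep
    have := P.smul_mem _ _ _ _ hrep (P.liftVal_spec hdeg (x : P.M →ₗ[k] k) j).1
    simpa using this
  · intro m
    have := P.gmap_chain_on (x : P.M →ₗ[k] k) Set.univ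
      (fun j _ => (P.liftVal_spec hdeg (x : P.M →ₗ[k] k) j).2.2) m
      (by rw [Set.image_univ, P.bas.span_eq]; trivial)
    exact this.symm
  · intro m
    conv_lhs => rw [← Basis.sum_repr P.bas m]
    rw [map_sum, P.gmap_apply, map_sum]
    refine Finset.sum_congr rfl fun j _ => ?_
    rw [hx1, P.εP_lin, (P.liftVal_spec hdeg (x : P.M →ₗ[k] k) j).2.1]

lemma cocycle_zero (P : SFR ε) [Fintype P.ι] (hconn : 𝔸.connected)
    (hdeg : ∀ i, P.degB i = 0) (hmin : P.toDGMod.Minimal ε) {w : P.M}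
    (h0 : w ∈ P.grading 0) (hd : P.dM w = 0) (he : P.εP w = 0) : w = 0 := by
  obtain ⟨y, hy⟩ := P.qis_ker 0 w h0 hd he
  exact eq_zero_of_IP_of_grading_zero P hconn hdeg h0 (hy ▸ hmin y)

lemma lift_unique (P : SFR ε) [Fintype P.ι] (hconn : 𝔸.connected)
    (hdeg : ∀ i, P.degB i = 0) (hmin : P.toDGMod.Minimal ε) {x : ↥(ExtSpace P)}
    {g₁ g₂ : P.M →ₗ[k] P.M} (h1 : IsLift P g₁ x) (h2 : IsLift P g₂ x) : g₁ = g₂ := by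
  obtain ⟨h1s, h1g, h1d, h1e⟩ := h1
  obtain ⟨h2s, h2g, h2d, h2e⟩ := h2
  have key : ∀ N : ℕ, ∀ i : P.ι, P.lvl i < N → g₁ (P.bas i) = g₂ (P.bas i) := by
    intro N
    induction N with
    | zero => exact fun i hi => absurd hi (Nat.not_lt_zero _)
    | succ N IH =>
      intro i hiN
      have hlow : ∀ m ∈ Submodule.span 𝔸.A (P.bas '' {j | P.lvl j < P.lvl i}),
          g₁ m = g₂ m := by
        intro m hm
        induction hm using Submodule.span_induction with
        | mem u hu =>
          obtain ⟨j, hj, rfl⟩ := hu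
          exact IH j (lt_of_lt_of_le hj (Nat.lt_succ_iff.1 hiN))
        | zero => rw [map_zero, map_zero]
        | add u v _ _ hu hv => rw [map_add, map_add, hu, hv]
        | smul a u _ hu => rw [h1s, h2s, hu]
      have hbas0 : P.bas i ∈ P.grading 0 := hdeg i ▸ P.homog i
      have hw0 : g₁ (P.bas i) - g₂ (P.bas i) ∈ P.grading 0 :=
        sub_mem (h1g _ _ hbas0) (h2g _ _ hbas0)
      have hwd : P.dM (g₁ (P.bas i) - g₂ (P.bas i)) = 0 := by
        rw [map_sub, ← h1d, ← h2d, hlow _ (P.d_lvl i), sub_self]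
      have hwe : P.εP (g₁ (P.bas i) - g₂ (P.bas i)) = 0 := by
        rw [map_sub, ← h1e, ← h2e, sub_self]
      have := cocycle_zero P hconn hdeg hmin hw0 hwd hwe
      exact sub_eq_zero.1 this
  have hall : ∀ m ∈ Submodule.span 𝔸.A (P.bas '' Set.univ), g₁ m = g₂ m := by
    intro m hm
    induction hm using Submodule.span_induction with
    | mem u hu =>
      obtain ⟨j, _, rfl⟩ := hu
      exact key (P.lvl j + 1) j (Nat.lt_succ_self _)
    | zero => rw [map_zero, map_zero]
    | add u v _ _ hu hv => rw [map_add, map_add, hu, hv]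
    | smul a u _ hu => rw [h1s, h2s, hu]
  ext m
  exact hall m (by rw [Set.image_univ, P.bas.span_eq]; trivial)

noncomputable def mulFun (P : SFR ε) [Fintype P.ι] (hdeg : ∀ i, P.degB i = 0)
    (hmin : P.toDGMod.Minimal ε) (y x : ↥(ExtSpace P)) : ↥(ExtSpace P) :=
  ⟨(y : P.M →ₗ[k] k) ∘ₗ P.gmap (x : P.M →ₗ[k] k), by
    obtain ⟨hy1, hy2, hy3⟩ := (mem_ExtSpace_iff P (y : P.M →ₗ[k] k)).1 y.2
    have hl := isLift_gmap P hdeg x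
    refine (mem_ExtSpace_iff P _).2 ⟨?_, ?_, ?_⟩
    · intro a m
      show (y : P.M →ₗ[k] k) (P.gmap _ (a • m)) = _
      rw [hl.1, hy1]; rfl
    · intro n hn m hm
      exact hy2 n hn _ (hl.2.1 n m hm)
    · intro m
      show (y : P.M →ₗ[k] k) (P.gmap _ (P.dM m)) = 0
      rw [hl.2.2.1 m]
      exact semilinear_vanish_IP hy1 (hmin _)⟩

lemma mulFun_apply (P : SFR ε) [Fintype P.ι] (hdeg : ∀ i, P.degB i = 0)
    (hmin : P.toDGMod.Minimal ε) (y x : ↥(ExtSpace P)) (m : P.M) :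
    ((mulFun P hdeg hmin y x : ↥(ExtSpace P)) : P.M →ₗ[k] k) m
      = (y : P.M →ₗ[k] k) (P.gmap (x : P.M →ₗ[k] k) m) := rfl


lemma k_smul_comm (P : SFR ε) (c : k) (a : 𝔸.A) (v : P.M) :
    c • (a • v) = a • (c • v) := by
  rw [← algebraMap_smul 𝔸.A c (a • v), ← algebraMap_smul 𝔸.A c v, ← mul_smul, ← mul_smul,
    Algebra.commutes]

lemma isLift_add {P : SFR ε} {g₁ g₂ : P.M →ₗ[k] P.M} {x₁ x₂ : ↥(ExtSpace P)}
    (h1 : IsLift P g₁ x₁) (h2 : IsLift P g₂ x₂) : IsLift P (g₁ + g₂) (x₁ + x₂) := by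
  obtain ⟨h1s, h1g, h1d, h1e⟩ := h1
  obtain ⟨h2s, h2g, h2d, h2e⟩ := h2
  refine ⟨fun a m => ?_, fun n m hm => ?_, fun m => ?_, fun m => ?_⟩
  · simp [h1s, h2s, smul_add]
  · exact add_mem (h1g n m hm) (h2g n m hm)
  · simp [h1d, h2d]
  · show (x₁ : P.M →ₗ[k] k) m + (x₂ : P.M →ₗ[k] k) m = _
    simp [h1e m, h2e m]

lemma isLift_smul {P : SFR ε} {g : P.M →ₗ[k] P.M} {x : ↥(ExtSpace P)} (c : k)
    (h : IsLift P g x) : IsLift P (c • g) (c • x) := by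
  obtain ⟨hs, hg, hd, he⟩ := h
  refine ⟨fun a m => ?_, fun n m hm => ?_, fun m => ?_, fun m => ?_⟩
  · simp only [LinearMap.smul_apply, hs]
    rw [k_smul_comm]
  · exact Submodule.smul_mem _ _ (hg n m hm)
  · simp [hd]
  · show c • (x : P.M →ₗ[k] k) m = _
    simp [he m]

lemma isLift_id {P : SFR ε} : IsLift P LinearMap.id (unitE P) :=
  ⟨fun a m => rfl, fun n m hm => hm, fun m => rfl, fun m => rfl⟩

lemma isLift_gmap_comp (P : SFR ε) [Fintype P.ι] (hdeg : ∀ i, P.degB i = 0)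
    (hmin : P.toDGMod.Minimal ε) (y x : ↥(ExtSpace P)) :
    IsLift P (P.gmap (y : P.M →ₗ[k] k) ∘ₗ P.gmap (x : P.M →ₗ[k] k))
      (mulFun P hdeg hmin y x) := by
  obtain ⟨hys, hyg, hyd, hye⟩ := isLift_gmap P hdeg y
  obtain ⟨hxs, hxg, hxd, hxe⟩ := isLift_gmap P hdeg x
  refine ⟨fun a m => ?_, fun n m hm => ?_, fun m => ?_, fun m => ?_⟩
  · simp only [LinearMap.comp_apply, hxs, hys]
  · exact hyg n _ (hxg n m hm)
  · simp only [LinearMap.comp_apply, hxd, hyd]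
  · rw [mulFun_apply]
    exact hye _

lemma extMulOk (P : SFR ε) [Fintype P.ι] (hconn : 𝔸.connected)
    (hdeg : ∀ i, P.degB i = 0) (hmin : P.toDGMod.Minimal ε) :
    ExtMulOk P (mulFun P hdeg hmin) where
  compat := by
    intro y x g hg m
    rw [mulFun_apply, lift_unique P hconn hdeg hmin (isLift_gmap P hdeg x) hg]
  add_left y₁ y₂ x := by
    apply Subtype.ext; apply LinearMap.ext; intro m
    show ((y₁ : P.M →ₗ[k] k) + (y₂ : P.M →ₗ[k] k)) (P.gmap _ m)
      = ((mulFun P hdeg hmin y₁ x : ↥(ExtSpace P)) : P.M →ₗ[k] k) m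
        + ((mulFun P hdeg hmin y₂ x : ↥(ExtSpace P)) : P.M →ₗ[k] k) m
    rw [LinearMap.add_apply, mulFun_apply, mulFun_apply]
  add_right y x₁ x₂ := by
    have h : P.gmap ((x₁ : P.M →ₗ[k] k) + (x₂ : P.M →ₗ[k] k))
        = P.gmap (x₁ : P.M →ₗ[k] k) + P.gmap (x₂ : P.M →ₗ[k] k) :=
      lift_unique P hconn hdeg hmin (isLift_gmap P hdeg (x₁ + x₂))
      (isLift_add (isLift_gmap P hdeg x₁) (isLift_gmap P hdeg x₂))
    apply Subtype.ext; apply LinearMap.ext; intro m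
    show (y : P.M →ₗ[k] k) (P.gmap ((x₁ + x₂ : ↥(ExtSpace P)) : P.M →ₗ[k] k) m)
      = ((mulFun P hdeg hmin y x₁ : ↥(ExtSpace P)) : P.M →ₗ[k] k) m
        + ((mulFun P hdeg hmin y x₂ : ↥(ExtSpace P)) : P.M →ₗ[k] k) m
    rw [show ((x₁ + x₂ : ↥(ExtSpace P)) : P.M →ₗ[k] k)
        = (x₁ : P.M →ₗ[k] k) + (x₂ : P.M →ₗ[k] k) from rfl, h,
      LinearMap.add_apply, map_add, mulFun_apply, mulFun_apply]
  smul_left c y x := by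
    apply Subtype.ext; apply LinearMap.ext; intro m
    show (c • (y : P.M →ₗ[k] k)) (P.gmap _ m)
      = c • ((mulFun P hdeg hmin y x : ↥(ExtSpace P)) : P.M →ₗ[k] k) m
    rw [LinearMap.smul_apply, mulFun_apply]
  smul_right c y x := by
    have h : P.gmap (c • (x : P.M →ₗ[k] k)) = c • P.gmap (x : P.M →ₗ[k] k) :=
      lift_unique P hconn hdeg hmin (isLift_gmap P hdeg (c • x))
      (isLift_smul c (isLift_gmap P hdeg x))
    apply Subtype.ext; apply LinearMap.ext; intro m
    show (y : P.M →ₗ[k] k) (P.gmap ((c • x : ↥(ExtSpace P)) : P.M →ₗ[k] k) m)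
      = c • ((mulFun P hdeg hmin y x : ↥(ExtSpace P)) : P.M →ₗ[k] k) m
    rw [show ((c • x : ↥(ExtSpace P)) : P.M →ₗ[k] k)
        = c • (x : P.M →ₗ[k] k) from rfl, h,
      LinearMap.smul_apply, map_smul, mulFun_apply]
  assoc z y x := by
    have h := lift_unique P hconn hdeg hmin
      (isLift_gmap P hdeg (mulFun P hdeg hmin y x))
      (isLift_gmap_comp P hdeg hmin y x)
    apply Subtype.ext; apply LinearMap.ext; intro m
    show ((mulFun P hdeg hmin z y : ↥(ExtSpace P)) : P.M →ₗ[k] k)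
        (P.gmap ((x : P.M →ₗ[k] k)) m)
      = (z : P.M →ₗ[k] k)
          (P.gmap ((mulFun P hdeg hmin y x : ↥(ExtSpace P)) : P.M →ₗ[k] k) m)
    rw [h, mulFun_apply]
    rfl
  one_mul x := by
    apply Subtype.ext; apply LinearMap.ext; intro m
    show P.εP (P.gmap ((x : P.M →ₗ[k] k)) m) = (x : P.M →ₗ[k] k) m
    exact ((isLift_gmap P hdeg x).2.2.2 m).symm
  mul_one x := by
    have h := lift_unique P hconn hdeg hmin (isLift_gmap P hdeg (unitE P)) isLift_id
    apply Subtype.ext; apply LinearMap.ext; intro m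
    show (x : P.M →ₗ[k] k) (P.gmap ((unitE P : ↥(ExtSpace P)) : P.M →ₗ[k] k) m)
      = (x : P.M →ₗ[k] k) m
    rw [h]
    rfl


lemma mem_stdF_zero_of (P : SFR ε) {u : P.M} (h1 : u ∈ P.kE) (h2 : P.dM u = 0) :
    u ∈ P.stdF 0 :=
  Submodule.subset_span (SetLike.mem_coe.2 (Submodule.mem_inf.2 ⟨h1, LinearMap.mem_ker.2 h2⟩))

lemma mem_stdF_succ_of (P : SFR ε) {u : P.M} {j : ℕ} (h1 : u ∈ P.kE)
    (h2 : P.dM u ∈ P.stdF j) : u ∈ P.stdF (j+1) :=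
  Submodule.subset_span (SetLike.mem_coe.2 (Submodule.mem_inf.2
    ⟨h1, Submodule.mem_comap.2 (Submodule.restrictScalars_mem _ _ _ |>.2 h2)⟩))

lemma stdF_le_succ (P : SFR ε) : ∀ j, P.stdF j ≤ P.stdF (j+1) := by
  intro j
  induction j with
  | zero =>
    apply Submodule.span_le.2
    intro u hu
    obtain ⟨h1, h2⟩ := Submodule.mem_inf.1 (SetLike.mem_coe.1 hu)
    exact SetLike.mem_coe.2 (mem_stdF_succ_of P h1
      (by rw [(LinearMap.mem_ker (f := P.dM)).1 h2]; exact zero_mem _))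
  | succ j IH =>
    apply Submodule.span_le.2
    intro u hu
    obtain ⟨h1, h2⟩ := Submodule.mem_inf.1 (SetLike.mem_coe.1 hu)
    exact SetLike.mem_coe.2 (mem_stdF_succ_of P h1
      (IH (Submodule.mem_comap (f := P.dM) |>.1 h2)))

lemma stdF_mono (P : SFR ε) : Monotone P.stdF :=
  monotone_nat_of_le_succ (stdF_le_succ P)

lemma bas_mem_kE (P : SFR ε) (i : P.ι) : P.bas i ∈ P.kE :=
  Submodule.subset_span ⟨i, rfl⟩

lemma bas_mem_stdF (P : SFR ε) : ∀ i, P.bas i ∈ P.stdF (P.lvl i) := by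
  suffices H : ∀ N : ℕ, ∀ i : P.ι, P.lvl i < N → P.bas i ∈ P.stdF (P.lvl i) from
    fun i => H (P.lvl i + 1) i (Nat.lt_succ_self _)
  intro N
  induction N with
  | zero => exact fun i hi => absurd hi (Nat.not_lt_zero _)
  | succ N IH =>
    intro i hiN
    cases h : P.lvl i with
    | zero =>
      have hempty : {j : P.ι | P.lvl j < P.lvl i} = ∅ := by
        ext j; simp [h]
      have hd := P.d_lvl i
      rw [hempty, Set.image_empty, Submodule.span_empty, Submodule.mem_bot] at hd
      exact mem_stdF_zero_of P (bas_mem_kE P i) hd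
    | succ t =>
      refine mem_stdF_succ_of P (bas_mem_kE P i) ?_
      have hd := P.d_lvl i
      have hle : Submodule.span 𝔸.A (P.bas '' {j | P.lvl j < P.lvl i}) ≤ P.stdF t := by
        apply Submodule.span_le.2
        rintro u ⟨j, hj, rfl⟩
        have hj' : P.lvl j < P.lvl i := hj
        have hjt : P.lvl j ≤ t := by omega
        have := IH j (by omega)
        exact SetLike.mem_coe.2 (stdF_mono P hjt this)
      exact hle hd

lemma stdF_top (P : SFR ε) [Fintype P.ι] :
    P.stdF (Finset.univ.sup P.lvl) = ⊤ := by
  rw [eq_top_iff, ← P.bas.span_eq]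
  apply Submodule.span_le.2
  rintro u ⟨i, rfl⟩
  exact SetLike.mem_coe.2 (stdF_mono P (Finset.le_sup (Finset.mem_univ i)) (bas_mem_stdF P i))

lemma gmap_stdF (P : SFR ε) [Fintype P.ι] (hconn : 𝔸.connected)
    (hdeg : ∀ i, P.degB i = 0) (hmin : P.toDGMod.Minimal ε) (x : ↥(ExtSpace P))
    (n : ℕ) (hx : x ∈ Fil P n) :
    ∀ j : ℕ, ∀ u ∈ P.stdF j,
      (j < n → P.gmap (x : P.M →ₗ[k] k) u = 0) ∧
      (n ≤ j → P.gmap (x : P.M →ₗ[k] k) u ∈ P.stdF (j - n)) := by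
  have hl := isLift_gmap P hdeg x
  have hxv : ∀ (j : ℕ) (u : P.M), j < n → u ∈ P.stdF j → (x : P.M →ₗ[k] k) u = 0 := by
    intro j u hj hu
    obtain ⟨n', rfl⟩ : ∃ n', n = n' + 1 := ⟨n - 1, by omega⟩
    exact (mem_Fil_succ_iff P n' x).1 hx u (stdF_mono P (by omega) hu)
  intro j
  induction j with
  | zero =>
    intro u hu
    induction hu using Submodule.span_induction with
    | mem u hu =>
      obtain ⟨h1, h2⟩ := Submodule.mem_inf.1 (SetLike.mem_coe.1 hu)
      rw [LinearMap.mem_ker (f := P.dM)] at h2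
      have hg0 : P.gmap (x : P.M →ₗ[k] k) u ∈ P.grading 0 :=
        hl.2.1 0 u (kE_le_grading_zero P hdeg h1)
      have hgd : P.dM (P.gmap (x : P.M →ₗ[k] k) u) = 0 := by
        rw [← hl.2.2.1, h2, map_zero]
      constructor
      · intro hn
        apply cocycle_zero P hconn hdeg hmin hg0 hgd
        rw [← hl.2.2.2]
        exact hxv 0 u hn (mem_stdF_zero_of P h1 h2)
      · intro _
        rw [Nat.zero_sub]
        exact mem_stdF_zero_of P (grading_zero_mem_kE P hconn hdeg hg0) hgd
    | zero => exact ⟨fun _ => map_zero _, fun _ => by rw [map_zero]; exact zero_mem _⟩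
    | add u v _ _ hu hv =>
      refine ⟨fun hn => ?_, fun hn => ?_⟩
      · rw [map_add, hu.1 hn, hv.1 hn, add_zero]
      · rw [map_add]; exact add_mem (hu.2 hn) (hv.2 hn)
    | smul a u _ hu =>
      refine ⟨fun hn => ?_, fun hn => ?_⟩
      · rw [P.gmap_smul, hu.1 hn, smul_zero]
      · rw [P.gmap_smul]; exact Submodule.smul_mem _ _ (hu.2 hn)
  | succ j IH =>
    intro u hu
    induction hu using Submodule.span_induction with
    | mem u hu =>
      obtain ⟨h1, h2⟩ := Submodule.mem_inf.1 (SetLike.mem_coe.1 hu)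
      have h2' : P.dM u ∈ P.stdF j := Submodule.mem_comap (f := P.dM) |>.1 h2
      have hg0 : P.gmap (x : P.M →ₗ[k] k) u ∈ P.grading 0 :=
        hl.2.1 0 u (kE_le_grading_zero P hdeg h1)
      constructor
      · intro hn
        apply cocycle_zero P hconn hdeg hmin hg0
        · rw [← hl.2.2.1]
          exact (IH _ h2').1 (by omega)
        · rw [← hl.2.2.2]
          exact hxv (j+1) u hn (mem_stdF_succ_of P h1 h2')
      · intro hn
        by_cases hjn : n ≤ j
        · rw [show j + 1 - n = (j - n) + 1 from by omega]
          refine mem_stdF_succ_of P (grading_zero_mem_kE P hconn hdeg hg0) ?_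
          rw [← hl.2.2.1]
          exact (IH _ h2').2 hjn
        · rw [show j + 1 - n = 0 from by omega]
          refine mem_stdF_zero_of P (grading_zero_mem_kE P hconn hdeg hg0) ?_
          rw [← hl.2.2.1]
          exact (IH _ h2').1 (by omega)
    | zero => exact ⟨fun _ => map_zero _, fun _ => by rw [map_zero]; exact zero_mem _⟩
    | add u v _ _ hu hv =>
      refine ⟨fun hn => ?_, fun hn => ?_⟩
      · rw [map_add, hu.1 hn, hv.1 hn, add_zero]
      · rw [map_add]; exact add_mem (hu.2 hn) (hv.2 hn)
    | smul a u _ hu =>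
      refine ⟨fun hn => ?_, fun hn => ?_⟩
      · rw [P.gmap_smul, hu.1 hn, smul_zero]
      · rw [P.gmap_smul]; exact Submodule.smul_mem _ _ (hu.2 hn)

lemma mulFun_Fil (P : SFR ε) [Fintype P.ι] (hconn : 𝔸.connected)
    (hdeg : ∀ i, P.degB i = 0) (hmin : P.toDGMod.Minimal ε) :
    ∀ (n m : ℕ) (x y : ↥(ExtSpace P)), x ∈ Fil P n → y ∈ Fil P m →
      mulFun P hdeg hmin y x ∈ Fil P (n + m) := by
  intro n m x y hx hy
  cases hnm : n + m with
  | zero => rw [Fil_zero]; exact Submodule.mem_top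
  | succ s =>
    rw [mem_Fil_succ_iff]
    intro u hu
    rw [mulFun_apply]
    by_cases hsn : s < n
    · rw [(gmap_stdF P hconn hdeg hmin x n hx s u hu).1 hsn, map_zero]
    · have hgu := (gmap_stdF P hconn hdeg hmin x n hx s u hu).2 (by omega)
      obtain ⟨m', rfl⟩ : ∃ m', m = m' + 1 := ⟨m - 1, by omega⟩
      rw [show s - n = m' from by omega] at hgu
      exact (mem_Fil_succ_iff P m' y).1 hy _ hgu

lemma kE_ker_char (P : SFR ε) [Fintype P.ι] (hconn : 𝔸.connected)
    (hdeg : ∀ i, P.degB i = 0) (hmin : P.toDGMod.Minimal ε) {e : P.M}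
    (he0 : e ∈ P.grading 0) (hde : P.dM e = 0) (hεe : P.εP e = 1)
    {u : P.M} (h1 : u ∈ P.kE) (h2 : P.dM u = 0) : u = P.εP u • e := by
  have hw0 : u - P.εP u • e ∈ P.grading 0 :=
    sub_mem (kE_le_grading_zero P hdeg h1) (Submodule.smul_mem _ _ he0)
  have hwd : P.dM (u - P.εP u • e) = 0 := by
    rw [map_sub, map_smul, h2, hde, smul_zero, sub_zero]
  have hwe : P.εP (u - P.εP u • e) = 0 := by
    rw [map_sub, map_smul, hεe, smul_eq_mul, mul_one, sub_self]
  have := cocycle_zero P hconn hdeg hmin hw0 hwd hwe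
  rw [sub_eq_zero] at this
  exact this

lemma mem_Fil_one_iff (P : SFR ε) [Fintype P.ι] (hconn : 𝔸.connected)
    (hdeg : ∀ i, P.degB i = 0) (hmin : P.toDGMod.Minimal ε) {e : P.M}
    (he0 : e ∈ P.grading 0) (hde : P.dM e = 0) (hεe : P.εP e = 1)
    (x : ↥(ExtSpace P)) : x ∈ Fil P 1 ↔ (x : P.M →ₗ[k] k) e = 0 := by
  constructor
  · intro hx
    exact (mem_Fil_succ_iff P 0 x).1 hx e
      (mem_stdF_zero_of P (grading_zero_mem_kE P hconn hdeg he0) hde)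
  · intro hxe
    rw [mem_Fil_succ_iff]
    intro u hu
    obtain ⟨hx1, _, _⟩ := (mem_ExtSpace_iff P (x : P.M →ₗ[k] k)).1 x.2
    induction hu using Submodule.span_induction with
    | mem u hu =>
      obtain ⟨h1, h2⟩ := Submodule.mem_inf.1 (SetLike.mem_coe.1 hu)
      rw [LinearMap.mem_ker (f := P.dM)] at h2
      rw [kE_ker_char P hconn hdeg hmin he0 hde hεe h1 h2, map_smul, hxe, smul_zero]
    | zero => exact map_zero _
    | add u v _ _ hu hv => rw [map_add, hu, hv, add_zero]
    | smul a u _ hu => rw [hx1, hu, mul_zero]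

lemma extSpace_findim (P : SFR ε) [Fintype P.ι] :
    FiniteDimensional k ↥(ExtSpace P) := by
  let Φ : ↥(ExtSpace P) →ₗ[k] (P.ι → k) :=
    { toFun := fun f i => (f : P.M →ₗ[k] k) (P.bas i)
      map_add' := fun f g => rfl
      map_smul' := fun c f => rfl }
  apply FiniteDimensional.of_injective Φ
  rw [← LinearMap.ker_eq_bot, eq_bot_iff]
  intro f hf
  rw [LinearMap.mem_ker] at hf
  have hfb : ∀ i, (f : P.M →ₗ[k] k) (P.bas i) = 0 := fun i => congrFun hf i
  obtain ⟨hf1, _, _⟩ := (mem_ExtSpace_iff P (f : P.M →ₗ[k] k)).1 f.2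
  rw [Submodule.mem_bot]
  apply Subtype.ext; apply LinearMap.ext; intro m
  show (f : P.M →ₗ[k] k) m = 0
  conv_lhs => rw [← Basis.sum_repr P.bas m]
  rw [map_sum]
  exact Finset.sum_eq_zero fun i _ => by rw [hf1, hfb, mul_zero]

end Aux
/-- Let `A` be a Koszul DG algebra such that the trivial module `k` is
compact in `D(A)` (i.e. `k` has a minimal semifree resolution `P` with finite semibasis).
Then the Ext-algebra `E = Ext⁰_A(k,k)` is a finite dimensional local `k`-algebra with
residue field `E/J ≅ k`, where the Jacobson radical `J` coincides with the filtration
step `F₁` (its elements are nilpotent, its complement consists of units, and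
`E = k·1 ⊕ F₁`). -/
theorem ext_algebra_finite_local (𝔸 : DGA k) (hconn : 𝔸.connected) (ε : 𝔸.Aug)
    (hKoszul : ExtVanish 𝔸 ε) (P : SFR ε) (hmin : P.toDGMod.Minimal ε)
    (hcompact : Finite P.ι) :
    FiniteDimensional k ↥(ExtSpace P) ∧
    ∃ mul : ↥(ExtSpace P) → ↥(ExtSpace P) → ↥(ExtSpace P),
      ExtMulOk P mul ∧
      (∀ (n m : ℕ) (x y : ↥(ExtSpace P)), x ∈ Fil P n → y ∈ Fil P m →
        mul y x ∈ Fil P (n + m)) ∧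
      -- `F₁` is a nil (two-sided) ideal …
      (∀ x : ↥(ExtSpace P), x ∈ Fil P 1 → ∃ N : ℕ, mulPow P mul x N = 0) ∧
      -- … whose complement consists of units, so `E` is local with `J = F₁`
      (∀ x : ↥(ExtSpace P), x ∉ Fil P 1 →
        ∃ y, mul y x = unitE P ∧ mul x y = unitE P) ∧
      -- and the residue field is `k`:  `E = k·1 ⊕ J`
      IsCompl (Submodule.span k {unitE P}) (Fil P 1) := by
  cases nonempty_fintype P.ι
  have hdeg : ∀ i, P.degB i = 0 := degB_eq_zero P hKoszul hmin
  obtain ⟨e, he0, hde, hεe⟩ := P.qis_surj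
  set mul := mulFun P hdeg hmin with hmuldef
  have hok : ExtMulOk P mul := extMulOk P hconn hdeg hmin
  have hfil : ∀ (n m : ℕ) (x y : ↥(ExtSpace P)), x ∈ Fil P n → y ∈ Fil P m →
      mul y x ∈ Fil P (n + m) := mulFun_Fil P hconn hdeg hmin
  letI ringE : Ring ↥(ExtSpace P) :=
    { (inferInstance : AddCommGroup ↥(ExtSpace P)) with
      mul := mul
      one := unitE P
      left_distrib := fun a b c => hok.add_right a b c
      right_distrib := fun a b c => hok.add_left a b c
      zero_mul := fun a => by
        have h := hok.add_left 0 0 a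
        rw [add_zero] at h
        exact add_eq_left.1 h.symm
      mul_zero := fun a => by
        have h := hok.add_right a 0 0
        rw [add_zero] at h
        exact add_eq_left.1 h.symm
      mul_assoc := fun a b c => hok.assoc a b c
      one_mul := hok.one_mul
      mul_one := hok.mul_one }
  have hpow : ∀ (z : ↥(ExtSpace P)) (n : ℕ), mulPow P mul z n = z ^ n := by
    intro z n
    induction n with
    | zero => rw [pow_zero]; rfl
    | succ n IH =>
      show mul z (mulPow P mul z n) = _
      rw [IH, pow_succ']
      rfl
  set S : ℕ := Finset.univ.sup P.lvl with hS
  have hFtriv : ∀ z : ↥(ExtSpace P), z ∈ Fil P (S + 2) → z = 0 := by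
    intro z hz
    apply Subtype.ext; apply LinearMap.ext; intro m
    show (z : P.M →ₗ[k] k) m = 0
    refine (mem_Fil_succ_iff P (S + 1) z).1 hz m ?_
    exact stdF_le_succ P S (by rw [stdF_top P]; exact Submodule.mem_top)
  have hFilpow : ∀ z : ↥(ExtSpace P), z ∈ Fil P 1 → ∀ n, mulPow P mul z n ∈ Fil P n := by
    intro z hz n
    induction n with
    | zero => rw [Fil_zero]; exact Submodule.mem_top
    | succ n IH => exact hfil n 1 (mulPow P mul z n) z IH hz
  have hnil : ∀ x : ↥(ExtSpace P), x ∈ Fil P 1 → ∃ N, mulPow P mul x N = 0 :=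
    fun z hz => ⟨S + 2, hFtriv _ (hFilpow z hz (S + 2))⟩
  have hlam : ∀ v : ↥(ExtSpace P), v ∈ Fil P 1 ↔ (v : P.M →ₗ[k] k) e = 0 :=
    fun v => mem_Fil_one_iff P hconn hdeg hmin he0 hde hεe v
  have hunit : ∀ x : ↥(ExtSpace P), x ∉ Fil P 1 →
      ∃ y, mul y x = unitE P ∧ mul x y = unitE P := by
    intro x hx
    set c : k := (x : P.M →ₗ[k] k) e with hc
    have hc0 : c ≠ 0 := fun h => hx ((hlam x).2 h)
    set z : ↥(ExtSpace P) := 1 - c⁻¹ • x with hzdef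
    have hz1 : z ∈ Fil P 1 := by
      rw [hlam]
      show P.εP e - c⁻¹ • ((x : P.M →ₗ[k] k) e) = 0
      rw [hεe, ← hc, smul_eq_mul, inv_mul_cancel₀ hc0, sub_self]
    have hznil : IsNilpotent z :=
      ⟨S + 2, by rw [← hpow]; exact hFtriv _ (hFilpow z hz1 (S + 2))⟩
    obtain ⟨u, hu⟩ := hznil.isUnit_one_sub
    have huv : (↑u : ↥(ExtSpace P)) = c⁻¹ • x := by
      rw [hu, hzdef, sub_sub_cancel]
    have hxc : x = c • (↑u : ↥(ExtSpace P)) := by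
      rw [huv, smul_smul, mul_inv_cancel₀ hc0, one_smul]
    refine ⟨c⁻¹ • (↑u⁻¹ : ↥(ExtSpace P)), ?_, ?_⟩
    · have h1 : mul (c⁻¹ • (↑u⁻¹ : ↥(ExtSpace P))) x
          = c⁻¹ • (c • mul (↑u⁻¹ : ↥(ExtSpace P)) (↑u : ↥(ExtSpace P))) := by
        rw [hok.smul_left]
        congr 1
        conv_lhs => rw [hxc]
        rw [hok.smul_right]
      rw [h1, show mul (↑u⁻¹ : ↥(ExtSpace P)) (↑u : ↥(ExtSpace P))
          = ((↑u⁻¹ * ↑u : ↥(ExtSpace P))) from rfl, u.inv_mul, smul_smul,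
        inv_mul_cancel₀ hc0, one_smul]
      rfl
    · have h1 : mul x (c⁻¹ • (↑u⁻¹ : ↥(ExtSpace P)))
          = c⁻¹ • (c • mul (↑u : ↥(ExtSpace P)) (↑u⁻¹ : ↥(ExtSpace P))) := by
        rw [hok.smul_right]
        congr 1
        conv_lhs => rw [hxc]
        rw [hok.smul_left]
      rw [h1, show mul (↑u : ↥(ExtSpace P)) (↑u⁻¹ : ↥(ExtSpace P))
          = ((↑u * ↑u⁻¹ : ↥(ExtSpace P))) from rfl, u.mul_inv, smul_smul,
        inv_mul_cancel₀ hc0, one_smul]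
      rfl
  have hcompl : IsCompl (Submodule.span k {unitE P}) (Fil P 1) := by
    constructor
    · rw [disjoint_iff_inf_le]
      intro v hv
      obtain ⟨hv1, hv2⟩ := Submodule.mem_inf.1 hv
      obtain ⟨c', hc'⟩ := Submodule.mem_span_singleton.1 hv1
      have h0 := (hlam v).1 hv2
      rw [← hc'] at h0
      have hval : ((c' • unitE P : ↥(ExtSpace P)) : P.M →ₗ[k] k) e = c' := by
        show c' • P.εP e = c'
        rw [hεe, smul_eq_mul, mul_one]
      rw [hval] at h0
      rw [Submodule.mem_bot, ← hc', h0, zero_smul]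
    · rw [codisjoint_iff_le_sup]
      intro v _
      set c' : k := (v : P.M →ₗ[k] k) e with hc'
      have h1 : c' • unitE P ∈ Submodule.span k {unitE P} :=
        Submodule.smul_mem _ _ (Submodule.mem_span_singleton_self _)
      have h2 : v - c' • unitE P ∈ Fil P 1 := by
        apply (hlam _).2
        show (v : P.M →ₗ[k] k) e - c' • P.εP e = 0
        rw [hεe, smul_eq_mul, mul_one, ← hc', sub_self]
      have h3 := Submodule.add_mem_sup h1 h2
      rwa [show c' • unitE P + (v - c' • unitE P) = v from by abel] at h3
  exact ⟨extSpace_findim P, mul, hok, hfil, hnil, hunit, hcompl⟩
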